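/- Let N be a complete normal subgroup of an n-space group Γ, let V = Span(N), and let K be the kernel of the action of Γ on V. Suppose b+B ∈ Γ, write b = c+d with c ∈ V and d ∈ V^⊥, and suppose that for every v ∈ V there exists a+A ∈ N with a + Av = c + Bv. Then b+B ∈ NK. Consequently the structure group Γ/NK acts effectively on V/N by the rule NK(b+B)·Nv = N(c+Bv). -/

import Mathlib

noncomputable section

abbrev Euc (n : ℕ) : Type := EuclideanSpace ℝ (Fin n)

abbrev AffG (n : ℕ) : Type := Euc n ≃ᵃ[ℝ] Euc n

/-- The translation `x ↦ a + x` as an affinity of `Eⁿ`. -/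
def transl {n : ℕ} (a : Euc n) : AffG n := AffineEquiv.constVAdd ℝ (Euc n) a

/-- `Span(H)` : the linear span of the translation vectors of `H`. -/
def spanOf {n : ℕ} (H : Subgroup (AffG n)) : Submodule ℝ (Euc n) :=
  Submodule.span ℝ {a : Euc n | transl a ∈ H}

/-- An `n`-space group: a group of isometries acting properly discontinuously
and cocompactly on `Eⁿ`. -/
def IsSpaceGroup {n : ℕ} (Γ : Subgroup (AffG n)) : Prop :=
  (∀ f ∈ Γ, Isometry (⇑f)) ∧
  (∀ K : Set (Euc n), IsCompact K →
    {γ : AffG n | γ ∈ Γ ∧ ((⇑γ '' K) ∩ K).Nonempty}.Finite) ∧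
  (∃ K : Set (Euc n), IsCompact K ∧ ∀ x : Euc n, ∃ γ ∈ Γ, γ x ∈ K)

/-- `N` is a complete normal subgroup of `Γ`:  it is normal in `Γ` and
equals `{a+A ∈ Γ : a ∈ V ∧ V^⊥ ⊆ Fix A}` where `V = Span N`
(for `f = a + A` we have `a = f 0` and `A = f.linear`). -/
def IsCompleteNormal {n : ℕ} (N Γ : Subgroup (AffG n)) : Prop :=
  N ≤ Γ ∧ (∀ γ ∈ Γ, ∀ ν ∈ N, γ * ν * γ⁻¹ ∈ N) ∧
  (∀ f : AffG n, f ∈ N ↔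
    f ∈ Γ ∧ f 0 ∈ spanOf N ∧ ∀ x ∈ (spanOf N)ᗮ, f.linear x = x)

/-- Membership in the kernel `K = {b+B ∈ Γ : b ∈ V^⊥ ∧ V ⊆ Fix B}`
of the action of `Γ` on `V`. -/
def InKernel {n : ℕ} (Γ : Subgroup (AffG n)) (V : Submodule ℝ (Euc n)) (f : AffG n) : Prop :=
  f ∈ Γ ∧ f 0 ∈ Vᗮ ∧ ∀ x ∈ V, f.linear x = x

end

section Aux

/-- An affine automorphism applied to a sum of a point and a vector. -/
lemma affEq_apply_add {n : ℕ} (g : AffG n) (p w : Euc n) :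
    g (p + w) = g p + g.linear w := by
  simpa [add_comm] using g.map_vadd p w

/-- A space group is countable. -/
lemma spaceGroup_countable {n : ℕ} (Γ : Subgroup (AffG n)) (hΓ : IsSpaceGroup Γ) :
    (Γ : Set (AffG n)).Countable := by
  have h1 : (Γ : Set (AffG n)) ⊆ ⋃ m : ℕ,
      {γ : AffG n | γ ∈ Γ ∧ ((⇑γ '' Metric.closedBall 0 m) ∩ Metric.closedBall 0 m).Nonempty} := by
    intro γ hγ
    refine Set.mem_iUnion.2 ⟨⌈‖γ 0‖⌉₊, hγ, ⟨γ 0, ⟨0, ?_, rfl⟩, ?_⟩⟩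
    · simp [Metric.mem_closedBall]
    · simp only [Metric.mem_closedBall, dist_zero_right]
      exact Nat.le_ceil _
  exact (Set.countable_iUnion fun m =>
    (hΓ.2.1 _ (isCompact_closedBall _ _)).countable).mono h1

end Aux

/-- Theorem 6 (key step): if `b+B ∈ Γ`, `b = c + d` with `c ∈ V`, `d ∈ V^⊥`, and for every
`v ∈ V` there is `a+A ∈ N` with `a + A v = c + B v`, then `b + B ∈ NK`; consequently the
structure group `Γ/NK` acts effectively on `V/N`. -/
theorem stmt1 {n : ℕ} (Γ N K : Subgroup (AffG n))
    (hΓ : IsSpaceGroup Γ) (hN : IsCompleteNormal N Γ)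
    (hK : ∀ f : AffG n, f ∈ K ↔ InKernel Γ (spanOf N) f)
    (f : AffG n) (hf : f ∈ Γ) (c d : Euc n)
    (hc : c ∈ spanOf N) (hd : d ∈ (spanOf N)ᗮ) (hcd : f 0 = c + d)
    (hfix : ∀ v ∈ spanOf N, ∃ g ∈ N, g v = c + f.linear v) :
    f ∈ N ⊔ K := by
  set V : Submodule ℝ (Euc n) := spanOf N with hV
  -- `N` is countable
  haveI hcount : Countable ↥N :=
    (((spaceGroup_countable Γ hΓ).mono hN.1)).to_subtype
  haveI : Nonempty ↥V := ⟨0⟩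
  -- By Baire category, a single element of `N` agrees with `v ↦ c + f.linear v` on all of `V`.
  have key : ∃ g ∈ N, ∀ v ∈ V, g v = c + f.linear v := by
    set S : ↥N → Set ↥V := fun g => {v : ↥V | (g : AffG n) ↑v = c + f.linear ↑v} with hS
    have hclosed : ∀ g : ↥N, IsClosed (S g) := by
      intro g
      have hcont1 : Continuous fun v : ↥V => (g : AffG n) ↑v :=
        ((g : AffG n).toAffineMap.continuous_of_finiteDimensional).comp continuous_subtype_val
      have hcont2 : Continuous fun v : ↥V => c + f.linear ↑v :=
        continuous_const.add
          ((f.linear.toLinearMap.continuous_of_finiteDimensional).comp continuous_subtype_val)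
      exact isClosed_eq hcont1 hcont2
    have hU : ⋃ g : ↥N, S g = Set.univ := by
      refine Set.eq_univ_of_forall fun v => ?_
      obtain ⟨g, hg, hgv⟩ := hfix ↑v v.2
      exact Set.mem_iUnion.2 ⟨⟨g, hg⟩, hgv⟩
    obtain ⟨g, hint⟩ := nonempty_interior_of_iUnion_of_closed hclosed hU
    obtain ⟨x0, hx0⟩ := hint
    obtain ⟨ε, hε, hball⟩ := Metric.mem_nhds_iff.1 (mem_interior_iff_mem_nhds.1 hx0)
    have hx0S : (g : AffG n) ↑x0 = c + f.linear ↑x0 := hball (Metric.mem_ball_self hε)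
    refine ⟨g, g.2, fun v hv => ?_⟩
    set y : ↥V := ⟨v, hv⟩ with hy
    set w : Euc n := v - ↑x0 with hw
    -- choose a small positive scalar
    set r : ℝ := ‖y - x0‖ with hr
    set t : ℝ := ε / (2 * (r + 1)) with ht
    have hr0 : (0:ℝ) ≤ r := norm_nonneg _
    have htpos : 0 < t := by positivity
    have hmem : x0 + t • (y - x0) ∈ S g := by
      apply hball
      have : dist (x0 + t • (y - x0)) x0 = t * r := by
        simp only [dist_eq_norm, add_sub_cancel_left, norm_smul, Real.norm_eq_abs,
          abs_of_pos htpos, hr]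
      rw [Metric.mem_ball, this]
      calc t * r ≤ t * (r + 1) := by nlinarith
        _ = ε / 2 := by rw [ht]; field_simp
        _ < ε := by linarith
    have hcoe : ((x0 + t • (y - x0) : ↥V) : Euc n) = ↑x0 + t • w := by
      simp [hw, hy]
    have h1 : (g : AffG n) (↑x0 + t • w) = c + f.linear (↑x0 + t • w) := by
      have h := hmem
      simp only [hS, Set.mem_setOf_eq, hcoe] at h
      exact h
    rw [affEq_apply_add, hx0S, map_smul, map_add, map_smul] at h1
    -- cancel to get agreement of linear parts in direction w
    have h2 : t • (g : AffG n).linear w = t • f.linear w := by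
      rw [add_assoc] at h1
      exact add_left_cancel (add_left_cancel h1)
    have h3 : (g : AffG n).linear w = f.linear w :=
      smul_right_injective _ (ne_of_gt htpos) h2
    have hvx : v = ↑x0 + w := by rw [hw]; abel
    rw [hvx, affEq_apply_add, hx0S, h3, map_add, add_assoc]
  -- Now factor `f = g * (g⁻¹ * f)` with `g ∈ N` and `g⁻¹ * f ∈ K`.
  obtain ⟨g, hgN, hg⟩ := key
  have hg0 : g 0 = c := by simpa using hg 0 V.zero_mem
  have hglin : ∀ v ∈ V, g.linear v = f.linear v := by
    intro v hv
    have h := hg v hv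
    have : g (0 + v) = g 0 + g.linear v := affEq_apply_add g 0 v
    rw [zero_add, hg0] at this
    rw [this] at h
    exact add_left_cancel h
  have hgfix : ∀ x ∈ Vᗮ, g.linear x = x := (hN.2.2 g).1 hgN |>.2.2
  have hkK : g⁻¹ * f ∈ K := by
    rw [hK]
    refine ⟨Γ.mul_mem (Γ.inv_mem (hN.1 hgN)) hf, ?_, ?_⟩
    · -- (g⁻¹ * f) 0 = d ∈ Vᗮ
      have e1 : (g⁻¹ * f) 0 = g⁻¹ (f 0) := rfl
      have e2 : g⁻¹ (c + d) = g⁻¹ c + (g⁻¹).linear d := affEq_apply_add g⁻¹ c d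
      have e3 : g⁻¹ c = 0 := by
        rw [← hg0]; exact g.symm_apply_apply 0
      have e4 : (g⁻¹).linear d = d := by
        have : g.linear d = d := hgfix d hd
        have := congrArg g.linear.symm this
        rw [g.linear.symm_apply_apply] at this
        rw [AffineEquiv.inv_def, AffineEquiv.linear_symm]
        exact this.symm
      rw [e1, hcd, e2, e3, e4, zero_add]
      exact hd
    · intro x hx
      have e5 : (g⁻¹ * f).linear x = (g⁻¹).linear (f.linear x) := rfl
      rw [e5, ← hglin x hx, AffineEquiv.inv_def, AffineEquiv.linear_symm]
      exact g.linear.symm_apply_apply x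
  have : g * (g⁻¹ * f) ∈ N ⊔ K := Subgroup.mul_mem_sup hgN hkK
  simpa [← mul_assoc] using this
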